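/- Let (H,B) be a Rota-Baxter Hopf algebra and define B₁:H→H by B₁(a)=a₁B(a₂). Then (H,B₁,B) is a Rota-Baxter system of Hopf algebras, i.e. B₁ is a coalgebra homomorphism with B₁(1)=1, and B₁(a)B₁(b)=B₁(B₁(a₁)bS(B(a₂))) and B(a)B(b)=B(B₁(a₁)bS(B(a₂))) for all a,b∈H. -/

import Mathlib

open TensorProduct Coalgebra HopfAlgebra LinearMap

variable {F : Type*} [Field F] {H : Type*} [Ring H] [HopfAlgebra F H]

/-- The descendent operation `a ⊗ b ↦ B₁(a₁) b S(B₂(a₂))` as a linear map on `H ⊗ H`. -/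
noncomputable def circL (B₁ B₂ : H →ₗ[F] H) : H ⊗[F] H →ₗ[F] H :=
  (LinearMap.mul' F H)
    ∘ₗ (TensorProduct.map ((LinearMap.mul' F H) ∘ₗ TensorProduct.map B₁ LinearMap.id)
        ((antipode (R := F)) ∘ₗ B₂))
    ∘ₗ (TensorProduct.assoc F H H H).symm.toLinearMap
    ∘ₗ (TensorProduct.map LinearMap.id (TensorProduct.comm F H H).toLinearMap)
    ∘ₗ (TensorProduct.assoc F H H H).toLinearMap
    ∘ₗ (TensorProduct.map Coalgebra.comul LinearMap.id)

/-- The descendent operation `a ∘ b = B₁(a₁) b S(B₂(a₂))`. -/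
noncomputable def circ (B₁ B₂ : H →ₗ[F] H) (a b : H) : H := circL B₁ B₂ (a ⊗ₜ[F] b)

/-- The cocycle `σ = B₁ ∗ (S ∘ B₂)`, i.e. `σ(a) = B₁(a₁) S(B₂(a₂))`. -/
noncomputable def cocycleL (B₁ B₂ : H →ₗ[F] H) : H →ₗ[F] H :=
  (LinearMap.mul' F H) ∘ₗ (TensorProduct.map B₁ ((antipode (R := F)) ∘ₗ B₂)) ∘ₗ Coalgebra.comul

/-- `(H, B₁, B₂)` is a Rota-Baxter system of Hopf algebras: `B₁, B₂` are coalgebra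
homomorphisms sending `1` to `1` such that `Bᵢ(a)Bᵢ(b) = Bᵢ(B₁(a₁) b S(B₂(a₂)))`. -/
noncomputable def IsRBSystem (B₁ B₂ : H →ₗ[F] H) : Prop :=
  (Coalgebra.comul ∘ₗ B₁ = TensorProduct.map B₁ B₁ ∘ₗ Coalgebra.comul) ∧
  (Coalgebra.counit ∘ₗ B₁ = Coalgebra.counit (R := F)) ∧
  (Coalgebra.comul ∘ₗ B₂ = TensorProduct.map B₂ B₂ ∘ₗ Coalgebra.comul) ∧
  (Coalgebra.counit ∘ₗ B₂ = Coalgebra.counit (R := F)) ∧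
  B₁ 1 = 1 ∧ B₂ 1 = 1 ∧
  (∀ a b : H, B₁ a * B₁ b = B₁ (circ B₁ B₂ a b)) ∧
  (∀ a b : H, B₂ a * B₂ b = B₂ (circ B₁ B₂ a b))

/-! ### Auxiliary multilinear-map combinators -/

section Combinators

variable (F) {A A' : Type*} [Ring A] [Algebra F A] [Ring A'] [Algebra F A']
variable {M : Type*} [AddCommGroup M] [Module F M]

/-- trilinear `x y z ↦ (x*y)*z` -/
noncomputable def lmulT : A →ₗ[F] A →ₗ[F] A →ₗ[F] A :=
  (LinearMap.mul F A).compr₂ (LinearMap.mul F A)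

noncomputable def lmul₃ (g₁ g₂ g₃ : H →ₗ[F] A) : H →ₗ[F] H →ₗ[F] H →ₗ[F] A :=
  (((lmulT F).comp g₁).compl₂ g₂).compr₂ (LinearMap.lcomp F A g₃)

@[simp] lemma lmul₃_apply (g₁ g₂ g₃ : H →ₗ[F] A) (x y z : H) :
    lmul₃ F g₁ g₂ g₃ x y z = g₁ x * g₂ y * g₃ z := rfl

noncomputable def lmul₂ (g₁ g₂ : H →ₗ[F] A) : H →ₗ[F] H →ₗ[F] A :=
  ((LinearMap.mul F A).comp g₁).compl₂ g₂

@[simp] lemma lmul₂_apply (g₁ g₂ : H →ₗ[F] A) (x y : H) :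
    lmul₂ F g₁ g₂ x y = g₁ x * g₂ y := rfl

/-- 4-linear `(x,y,z,w) ↦ f x y ⊗ₜ g z w` -/
noncomputable def tmul₂₂ (f : H →ₗ[F] H →ₗ[F] A) (g : H →ₗ[F] H →ₗ[F] A') :
    H →ₗ[F] H →ₗ[F] H →ₗ[F] H →ₗ[F] (A ⊗[F] A') :=
  f.compr₂ (((LinearMap.llcomp F H (H →ₗ[F] A') (H →ₗ[F] (A ⊗[F] A'))).flip g) ∘ₗ
    (LinearMap.llcomp F H A' (A ⊗[F] A')) ∘ₗ (TensorProduct.mk F A A'))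

@[simp] lemma tmul₂₂_apply (f : H →ₗ[F] H →ₗ[F] A) (g : H →ₗ[F] H →ₗ[F] A') (x y z w : H) :
    tmul₂₂ F f g x y z w = (f x y) ⊗ₜ[F] (g z w) := rfl

/-- post-composition of a trilinear map -/
noncomputable def post₃ (g : M →ₗ[F] A) (f : H →ₗ[F] H →ₗ[F] H →ₗ[F] M) :
    H →ₗ[F] H →ₗ[F] H →ₗ[F] A :=
  f.compr₂ (LinearMap.llcomp F H M A g)

@[simp] lemma post₃_apply (g : M →ₗ[F] A) (f : H →ₗ[F] H →ₗ[F] H →ₗ[F] M) (x y z : H) :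
    post₃ F g f x y z = g (f x y z) := rfl

end Combinators

/-! ### Sweedler calculus in continuation-passing form -/

/-- representations of `comul z` indexed by `H × H` -/
abbrev ReprH (F : Type*) [Field F] {H : Type*} [Ring H] [HopfAlgebra F H] (z : H) : Type _ :=
  Coalgebra.Repr F z (H × H)

section Sweedler
variable {M : Type*} [AddCommGroup M] [Module F M]

lemma comul_expand (z : H) (ρ : ReprH F z) :
    Coalgebra.comul (R := F) z = ∑ i ∈ ρ.index, ρ.left i ⊗ₜ[F] ρ.right i := ρ.eq.symm

lemma sum_repr (z : H) (ρ : ReprH F z) (ψ : H →ₗ[F] H →ₗ[F] M) :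
    ∑ k ∈ ρ.index, ψ (ρ.left k) (ρ.right k)
      = TensorProduct.uncurry (RingHom.id F) H H M ψ (Coalgebra.comul z) := by
  rw [← ρ.eq, map_sum]; simp

/-- cocommutativity, continuation form -/
lemma cc_swap (hcc : ∀ a : H, (TensorProduct.comm F H H) (Coalgebra.comul a) = Coalgebra.comul a)
    (z : H) (ρ : ReprH F z) (ψ : H →ₗ[F] H →ₗ[F] M) :
    ∑ k ∈ ρ.index, ψ (ρ.left k) (ρ.right k) = ∑ k ∈ ρ.index, ψ (ρ.right k) (ρ.left k) := by
  have h1 : ∑ k ∈ ρ.index, ψ (ρ.right k) (ρ.left k)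
      = TensorProduct.lift ψ.flip (Coalgebra.comul z) := by
    rw [← ρ.eq, map_sum]; simp
  have h2 : TensorProduct.lift ψ.flip
      = (TensorProduct.lift ψ) ∘ₗ (TensorProduct.comm F H H).toLinearMap := by
    apply TensorProduct.ext'; intro x y; simp
  have h3 : ∑ k ∈ ρ.index, ψ (ρ.left k) (ρ.right k)
      = TensorProduct.lift ψ (Coalgebra.comul z) := by
    rw [← ρ.eq, map_sum]; simp
  rw [h3, h1, h2]
  simp [hcc z]

/-- coassociativity, continuation form -/
lemma coassoc_cont (z : H) (ρ : ReprH F z) (ρL : ∀ i, ReprH F (ρ.left i))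
    (ρR : ∀ i, ReprH F (ρ.right i)) (φ : H →ₗ[F] H →ₗ[F] H →ₗ[F] M) :
    ∑ i ∈ ρ.index, ∑ j ∈ (ρL i).index, φ ((ρL i).left j) ((ρL i).right j) (ρ.right i)
      = ∑ i ∈ ρ.index, ∑ k ∈ (ρR i).index, φ (ρ.left i) ((ρR i).left k) ((ρR i).right k) := by
  have key := Coalgebra.sum_tmul_tmul_eq (R := F) ρ ρL ρR
  have h := congrArg (TensorProduct.lift ((TensorProduct.uncurry (RingHom.id F) H H M).comp φ)) key
  simpa [map_sum] using h

lemma sum_counit_smul (z : H) (ρ : ReprH F z) :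
    ∑ i ∈ ρ.index, Coalgebra.counit (R := F) (ρ.left i) • ρ.right i = z := by
  have := congrArg (TensorProduct.lid F H) (Coalgebra.sum_counit_tmul_eq ρ)
  simp only [map_sum, lid_tmul, one_smul] at this
  exact this

lemma sum_smul_counit (z : H) (ρ : ReprH F z) :
    ∑ i ∈ ρ.index, Coalgebra.counit (R := F) (ρ.right i) • ρ.left i = z := by
  have := congrArg (TensorProduct.rid F H) (Coalgebra.sum_tmul_counit_eq ρ)
  simp only [map_sum, rid_tmul, one_smul] at this
  exact this

lemma sum_counit_counit (z : H) (ρ : ReprH F z) :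
    ∑ i ∈ ρ.index,
      Coalgebra.counit (R := F) (ρ.left i) * Coalgebra.counit (R := F) (ρ.right i)
      = Coalgebra.counit (R := F) z := by
  have := congrArg (Coalgebra.counit (R := F)) (sum_counit_smul z ρ)
  simpa [map_sum, smul_eq_mul] using this

/-- absorb the last two slots of a 4-linear map through comul -/
noncomputable def absorb (φ : H →ₗ[F] H →ₗ[F] H →ₗ[F] H →ₗ[F] M) :
    H →ₗ[F] H →ₗ[F] H →ₗ[F] M :=
  φ.compr₂ ((LinearMap.lcomp F M (Coalgebra.comul (R := F) (A := H))) ∘ₗ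
    (TensorProduct.uncurry (RingHom.id F) H H M))

lemma absorb_apply (φ : H →ₗ[F] H →ₗ[F] H →ₗ[F] H →ₗ[F] M) (x y z : H) :
    absorb φ x y z = TensorProduct.uncurry (RingHom.id F) H H M (φ x y) (Coalgebra.comul z) := rfl

lemma chain (a : H) (r : ReprH F a) (rL : ∀ i, ReprH F (r.left i)) (rR : ∀ i, ReprH F (r.right i))
    (rU : ∀ i k, ReprH F ((rR i).left k)) (φ : H →ₗ[F] H →ₗ[F] H →ₗ[F] H →ₗ[F] M) :
    ∑ i ∈ r.index, ∑ j ∈ (rL i).index, ∑ k ∈ (rR i).index,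
      φ ((rL i).left j) ((rL i).right j) ((rR i).left k) ((rR i).right k)
    = ∑ i ∈ r.index, ∑ k ∈ (rR i).index, ∑ j ∈ (rU i k).index,
      φ (r.left i) ((rU i k).left j) ((rU i k).right j) ((rR i).right k) := by
  have step1 : ∀ i ∈ r.index, ∀ j ∈ (rL i).index,
      ∑ k ∈ (rR i).index,
        φ ((rL i).left j) ((rL i).right j) ((rR i).left k) ((rR i).right k)
      = absorb φ ((rL i).left j) ((rL i).right j) (r.right i) := by
    intro i _ j _
    rw [absorb_apply, ← sum_repr (r.right i) (rR i)]
  rw [Finset.sum_congr rfl fun i hi => Finset.sum_congr rfl fun j hj => step1 i hi j hj]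
  rw [coassoc_cont a r rL rR (absorb φ)]
  apply Finset.sum_congr rfl; intro i _
  have step3 : ∀ k ∈ (rR i).index,
      absorb φ (r.left i) ((rR i).left k) ((rR i).right k)
      = ∑ j ∈ (Repr.arbitrary F ((rR i).right k)).index,
          φ (r.left i) ((rR i).left k)
            ((Repr.arbitrary F ((rR i).right k)).left j)
            ((Repr.arbitrary F ((rR i).right k)).right j) := by
    intro k _
    rw [absorb_apply, ← sum_repr ((rR i).right k) (Repr.arbitrary F ((rR i).right k))]
  rw [Finset.sum_congr rfl step3]
  exact (coassoc_cont (r.right i) (rR i) (rU i) (fun k => Repr.arbitrary F ((rR i).right k))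
    (φ (r.left i))).symm

/-- Sweedler legs 2-3 swap under cocommutativity -/
lemma swap23 (hcc : ∀ a : H, (TensorProduct.comm F H H) (Coalgebra.comul a) = Coalgebra.comul a)
    (a : H) (r : ReprH F a) (rL : ∀ i, ReprH F (r.left i)) (rR : ∀ i, ReprH F (r.right i))
    (φ : H →ₗ[F] H →ₗ[F] H →ₗ[F] H →ₗ[F] M) :
    ∑ i ∈ r.index, ∑ j ∈ (rL i).index, ∑ k ∈ (rR i).index,
      φ ((rL i).left j) ((rR i).left k) ((rL i).right j) ((rR i).right k)
    = ∑ i ∈ r.index, ∑ j ∈ (rL i).index, ∑ k ∈ (rR i).index,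
      φ ((rL i).left j) ((rL i).right j) ((rR i).left k) ((rR i).right k) := by
  set rU : ∀ i k, ReprH F ((rR i).left k) := fun i k => Repr.arbitrary F ((rR i).left k) with hrU
  have hflip : ∀ (x y z w : H), ((LinearMap.lflip (R₀ := F)).toLinearMap ∘ₗ φ) x y z w = φ x z y w := fun _ _ _ _ => rfl
  have h1 : ∑ i ∈ r.index, ∑ j ∈ (rL i).index, ∑ k ∈ (rR i).index,
      φ ((rL i).left j) ((rR i).left k) ((rL i).right j) ((rR i).right k)
      = ∑ i ∈ r.index, ∑ j ∈ (rL i).index, ∑ k ∈ (rR i).index,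
      ((LinearMap.lflip (R₀ := F)).toLinearMap ∘ₗ φ) ((rL i).left j) ((rL i).right j) ((rR i).left k)
        ((rR i).right k) := by
    simp only [hflip]
  rw [h1, chain a r rL rR rU, chain a r rL rR rU φ]
  apply Finset.sum_congr rfl; intro i _
  apply Finset.sum_congr rfl; intro k _
  simp only [hflip]
  exact (cc_swap hcc ((rR i).left k) (rU i k)
    ((φ (r.left i)).compr₂ (LinearMap.applyₗ ((rR i).right k)))).symm

/-- a Repr for `B z` from one of `z`, when `B` is a coalgebra hom -/
noncomputable def Repr.mapB (B : H →ₗ[F] H)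
    (hBc : Coalgebra.comul ∘ₗ B = TensorProduct.map B B ∘ₗ Coalgebra.comul)
    {z : H} (ρ : ReprH F z) : ReprH F (B z) where
  index := ρ.index
  left := B ∘ ρ.left
  right := B ∘ ρ.right
  eq := by
    have h := congrFun (congrArg DFunLike.coe hBc) z
    simp only [LinearMap.comp_apply] at h
    rw [show CoalgebraStruct.comul (R := F) (B z)
        = TensorProduct.map B B (Coalgebra.comul z) from h, ← ρ.eq, map_sum]
    simp

lemma sum_antipodeB (B : H →ₗ[F] H)
    (hBc : Coalgebra.comul ∘ₗ B = TensorProduct.map B B ∘ₗ Coalgebra.comul)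
    (hBe : Coalgebra.counit ∘ₗ B = Coalgebra.counit (R := F))
    (z : H) (ρ : ReprH F z) :
    ∑ i ∈ ρ.index, antipode (R := F) (B (ρ.left i)) * B (ρ.right i)
      = algebraMap F H (Coalgebra.counit (R := F) z) := by
  have h1 := HopfAlgebra.sum_antipode_mul_eq_algebraMap_counit (R := F) (Repr.mapB B hBc ρ)
  have h2 := congrFun (congrArg DFunLike.coe hBe) z
  simp only [LinearMap.comp_apply] at h2
  simp only [Repr.mapB, Function.comp_apply] at h1
  rw [h1, h2]

end Sweedler

/-! ### The maps `B₁` and `∘` -/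

noncomputable def Bone (B : H →ₗ[F] H) : H →ₗ[F] H :=
  (LinearMap.mul' F H) ∘ₗ TensorProduct.map LinearMap.id B ∘ₗ Coalgebra.comul

lemma Bone_expand (B : H →ₗ[F] H) (z : H) (ρ : ReprH F z) :
    Bone B z = ∑ i ∈ ρ.index, ρ.left i * B (ρ.right i) := by
  simp only [Bone, LinearMap.comp_apply]
  rw [comul_expand z ρ]
  simp [map_sum]

lemma circ_expand (B B₁ : H →ₗ[F] H) (a b : H) (ρ : ReprH F a) :
    circ B₁ B a b = ∑ i ∈ ρ.index, (B₁ (ρ.left i) * b) * antipode (R := F) (B (ρ.right i)) := by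
  simp only [circ, circL, LinearMap.comp_apply]
  rw [show ((TensorProduct.map Coalgebra.comul LinearMap.id) (a ⊗ₜ[F] b) : (H ⊗[F] H) ⊗[F] H)
      = (∑ i ∈ ρ.index, ρ.left i ⊗ₜ[F] ρ.right i) ⊗ₜ[F] b by rw [ρ.eq]; simp]
  simp [TensorProduct.sum_tmul, map_sum]

/-! ### Individual components of the theorem -/

section Components

variable (B : H →ₗ[F] H)

lemma B_one
    (hBc : Coalgebra.comul ∘ₗ B = TensorProduct.map B B ∘ₗ Coalgebra.comul)
    (hBe : Coalgebra.counit ∘ₗ B = Coalgebra.counit (R := F))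
    (hRB : ∀ a b : H, B a * B b =
      B (LinearMap.mul' F H (TensorProduct.map LinearMap.id
          ((LinearMap.mul' F H) ∘ₗ TensorProduct.map
            ((LinearMap.mulRight F b) ∘ₗ B) ((antipode (R := F)) ∘ₗ B))
          (TensorProduct.map LinearMap.id Coalgebra.comul (Coalgebra.comul a))))) :
    B 1 = 1 := by
  set c := B 1 with hc
  have hcomulc : Coalgebra.comul (R := F) c = c ⊗ₜ[F] c := by
    have := congrFun (congrArg DFunLike.coe hBc) 1
    simp only [LinearMap.comp_apply, Bialgebra.comul_one, Algebra.TensorProduct.one_def,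
      TensorProduct.map_tmul] at this
    exact this
  have hec : Coalgebra.counit (R := F) c = 1 := by
    have := congrFun (congrArg DFunLike.coe hBe) 1
    simpa using this
  have hSc : antipode (R := F) c * c = 1 := by
    have := HopfAlgebra.mul_antipode_rTensor_comul_apply (R := F) c
    rw [hcomulc] at this
    simpa [hec] using this
  have hcS : c * antipode (R := F) c = 1 := by
    have := HopfAlgebra.mul_antipode_lTensor_comul_apply (R := F) c
    rw [hcomulc] at this
    simpa [hec] using this
  have h11 := hRB 1 1
  simp only [Bialgebra.comul_one, Algebra.TensorProduct.one_def, TensorProduct.map_tmul,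
    LinearMap.id_coe, id_eq, LinearMap.comp_apply, LinearMap.mulRight_apply,
    LinearMap.mul'_apply, mul_one, one_mul] at h11
  rw [hcS] at h11
  have hcc' : c * c = c := by simpa using h11
  calc c = c * (c * antipode (R := F) c) := by rw [hcS, mul_one]
  _ = (c * c) * antipode (R := F) c := by rw [mul_assoc]
  _ = 1 := by rw [hcc', hcS]

lemma Bone_one
    (hB1 : B 1 = 1) : Bone B (1 : H) = 1 := by
  simp [Bone, Bialgebra.comul_one, Algebra.TensorProduct.one_def, hB1]

lemma Bone_counit
    (hBe : Coalgebra.counit ∘ₗ B = Coalgebra.counit (R := F)) :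
    Coalgebra.counit ∘ₗ Bone B = Coalgebra.counit (R := F) := by
  apply LinearMap.ext; intro a
  set r := Repr.arbitrary F a with hr
  simp only [LinearMap.comp_apply]
  rw [Bone_expand B a r, map_sum]
  have h1 : ∀ i ∈ r.index, Coalgebra.counit (R := F) (r.left i * B (r.right i))
      = Coalgebra.counit (R := F) (r.left i) * Coalgebra.counit (R := F) (r.right i) := by
    intro i _
    rw [Bialgebra.counit_mul]
    have := congrFun (congrArg DFunLike.coe hBe) (r.right i)
    simp only [LinearMap.comp_apply] at this
    rw [this]
  rw [Finset.sum_congr rfl h1, sum_counit_counit a r]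

lemma Bone_comul_expand
    (hcc : ∀ a : H, (TensorProduct.comm F H H) (Coalgebra.comul a) = Coalgebra.comul a)
    (hBc : Coalgebra.comul ∘ₗ B = TensorProduct.map B B ∘ₗ Coalgebra.comul)
    (a : H) (r : ReprH F a) :
    Coalgebra.comul (R := F) (Bone B a)
      = ∑ i ∈ r.index, Bone B (r.left i) ⊗ₜ[F] Bone B (r.right i) := by
  set rL : ∀ i, ReprH F (r.left i) := fun i => Repr.arbitrary F (r.left i) with hrL
  set rR : ∀ i, ReprH F (r.right i) := fun i => Repr.arbitrary F (r.right i) with hrR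
  have h1 : Coalgebra.comul (R := F) (Bone B a)
      = ∑ i ∈ r.index, ∑ j ∈ (rL i).index, ∑ k ∈ (rR i).index,
          ((rL i).left j * B ((rR i).left k)) ⊗ₜ[F] ((rL i).right j * B ((rR i).right k)) := by
    rw [Bone_expand B a r, map_sum]
    refine Finset.sum_congr rfl fun i _ => ?_
    rw [Bialgebra.comul_mul]
    have hB : Coalgebra.comul (R := F) (B (r.right i))
        = ∑ k ∈ (rR i).index, B ((rR i).left k) ⊗ₜ[F] B ((rR i).right k) := by
      have := congrFun (congrArg DFunLike.coe hBc) (r.right i)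
      simp only [LinearMap.comp_apply] at this
      rw [this, ← (rR i).eq, map_sum]; simp
    rw [hB, comul_expand (r.left i) (rL i), Finset.sum_mul_sum]
    simp [Algebra.TensorProduct.tmul_mul_tmul]
  rw [h1]
  have h2 := swap23 hcc a r rL rR
    (tmul₂₂ F (lmul₂ F LinearMap.id B) (lmul₂ F LinearMap.id B))
  simp only [tmul₂₂_apply, lmul₂_apply, LinearMap.id_coe, id_eq] at h2
  rw [h2]
  refine Finset.sum_congr rfl fun i _ => ?_
  rw [Bone_expand B (r.left i) (rL i), Bone_expand B (r.right i) (rR i),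
    TensorProduct.sum_tmul]
  exact Finset.sum_congr rfl fun j _ => by rw [TensorProduct.tmul_sum]

lemma Bone_comul
    (hcc : ∀ a : H, (TensorProduct.comm F H H) (Coalgebra.comul a) = Coalgebra.comul a)
    (hBc : Coalgebra.comul ∘ₗ B = TensorProduct.map B B ∘ₗ Coalgebra.comul) :
    Coalgebra.comul ∘ₗ Bone B = TensorProduct.map (Bone B) (Bone B) ∘ₗ Coalgebra.comul := by
  apply LinearMap.ext; intro a
  set r := Repr.arbitrary F a with hr
  simp only [LinearMap.comp_apply]
  rw [Bone_comul_expand B hcc hBc a r, comul_expand a r, map_sum]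
  simp

lemma G8 (hRB : ∀ a b : H, B a * B b =
      B (LinearMap.mul' F H (TensorProduct.map LinearMap.id
          ((LinearMap.mul' F H) ∘ₗ TensorProduct.map
            ((LinearMap.mulRight F b) ∘ₗ B) ((antipode (R := F)) ∘ₗ B))
          (TensorProduct.map LinearMap.id Coalgebra.comul (Coalgebra.comul a)))))
    (a b : H) :
    B a * B b = B (circ (Bone B) B a b) := by
  set r := Repr.arbitrary F a with hr
  set rL : ∀ i, ReprH F (r.left i) := fun i => Repr.arbitrary F (r.left i) with hrL
  set rR : ∀ i, ReprH F (r.right i) := fun i => Repr.arbitrary F (r.right i) with hrR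
  set S : H →ₗ[F] H := antipode (R := F) with hS
  rw [hRB a b]
  have hx : (LinearMap.mul' F H (TensorProduct.map LinearMap.id
          ((LinearMap.mul' F H) ∘ₗ TensorProduct.map
            ((LinearMap.mulRight F b) ∘ₗ B) ((antipode (R := F)) ∘ₗ B))
          (TensorProduct.map LinearMap.id Coalgebra.comul (Coalgebra.comul a))))
      = ∑ i ∈ r.index, ∑ k ∈ (rR i).index,
          r.left i * ((B ((rR i).left k) * b) * S (B ((rR i).right k))) := by
    rw [comul_expand a r]
    simp only [map_sum, TensorProduct.map_tmul, LinearMap.id_coe, id_eq]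
    refine Finset.sum_congr rfl fun i _ => ?_
    rw [comul_expand (r.right i) (rR i)]
    simp [TensorProduct.tmul_sum, map_sum, Finset.mul_sum, mul_assoc, hS]
  rw [hx, map_sum]
  rw [circ_expand B (Bone B) a b r]
  have hy : ∀ i ∈ r.index, (Bone B (r.left i) * b) * S (B (r.right i))
      = ∑ j ∈ (rL i).index,
        (((rL i).left j * B ((rL i).right j)) * b) * S (B (r.right i)) := by
    intro i _
    rw [Bone_expand B (r.left i) (rL i), Finset.sum_mul, Finset.sum_mul]
  rw [Finset.sum_congr rfl hy, map_sum]
  simp only [map_sum]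
  have key := coassoc_cont (M := H) a r rL rR
    (post₃ F B (lmul₃ F LinearMap.id ((LinearMap.mulRight F b) ∘ₗ B) (S ∘ₗ B)))
  simp only [post₃_apply, lmul₃_apply, LinearMap.comp_apply, LinearMap.mulRight_apply,
    LinearMap.id_coe, id_eq] at key
  simp only [mul_assoc] at key ⊢
  exact key.symm

/-! ### `comul ∘ antipode` for cocommutative Hopf algebras -/

lemma convI (z : H) (ρ : ReprH F z) :
    ∑ i ∈ ρ.index, Coalgebra.comul (R := F) (antipode (R := F) (ρ.left i))
        * Coalgebra.comul (R := F) (ρ.right i)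
      = algebraMap F (H ⊗[F] H) (Coalgebra.counit (R := F) z) := by
  have h : ∀ i ∈ ρ.index, Coalgebra.comul (R := F) (antipode (R := F) (ρ.left i))
        * Coalgebra.comul (R := F) (ρ.right i)
      = Coalgebra.comul (R := F) (antipode (R := F) (ρ.left i) * ρ.right i) := by
    intro i _; rw [Bialgebra.comul_mul]
  rw [Finset.sum_congr rfl h, ← map_sum, HopfAlgebra.sum_antipode_mul_eq_algebraMap_counit ρ,
    Bialgebra.comul_algebraMap]

lemma convII
    (hcc : ∀ a : H, (TensorProduct.comm F H H) (Coalgebra.comul a) = Coalgebra.comul a)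
    (z : H) (ρ : ReprH F z) :
    ∑ i ∈ ρ.index, Coalgebra.comul (R := F) (ρ.left i)
        * (TensorProduct.map (antipode (R := F)) (antipode (R := F))
            (Coalgebra.comul (R := F) (ρ.right i)))
      = algebraMap F (H ⊗[F] H) (Coalgebra.counit (R := F) z) := by
  set S : H →ₗ[F] H := antipode (R := F) with hS
  set rL : ∀ i, ReprH F (ρ.left i) := fun i => Repr.arbitrary F (ρ.left i) with hrL
  set rR : ∀ i, ReprH F (ρ.right i) := fun i => Repr.arbitrary F (ρ.right i) with hrR
  have h1 : ∀ i ∈ ρ.index, Coalgebra.comul (R := F) (ρ.left i)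
        * (TensorProduct.map S S (Coalgebra.comul (R := F) (ρ.right i)))
      = ∑ j ∈ (rL i).index, ∑ k ∈ (rR i).index,
          ((rL i).left j * S ((rR i).left k)) ⊗ₜ[F] ((rL i).right j * S ((rR i).right k)) := by
    intro i _
    rw [comul_expand (ρ.left i) (rL i), comul_expand (ρ.right i) (rR i), map_sum]
    simp only [TensorProduct.map_tmul]
    rw [Finset.sum_mul_sum]
    simp [Algebra.TensorProduct.tmul_mul_tmul]
  rw [Finset.sum_congr rfl h1]
  have h2 := swap23 hcc z ρ rL rR (tmul₂₂ F (lmul₂ F LinearMap.id S) (lmul₂ F LinearMap.id S))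
  simp only [tmul₂₂_apply, lmul₂_apply, LinearMap.id_coe, id_eq] at h2
  rw [h2]
  have h3 : ∀ i ∈ ρ.index, ∑ j ∈ (rL i).index, ∑ k ∈ (rR i).index,
      ((rL i).left j * S ((rL i).right j)) ⊗ₜ[F] ((rR i).left k * S ((rR i).right k))
      = (Coalgebra.counit (R := F) (ρ.left i) * Coalgebra.counit (R := F) (ρ.right i))
          • (1 : H ⊗[F] H) := by
    intro i _
    have e1 : ∀ j ∈ (rL i).index, ∑ k ∈ (rR i).index,
        ((rL i).left j * S ((rL i).right j)) ⊗ₜ[F] ((rR i).left k * S ((rR i).right k))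
        = ((rL i).left j * S ((rL i).right j)) ⊗ₜ[F]
            (algebraMap F H (Coalgebra.counit (R := F) (ρ.right i))) := by
      intro j _
      rw [← TensorProduct.tmul_sum, HopfAlgebra.sum_mul_antipode_eq_algebraMap_counit (rR i)]
    rw [Finset.sum_congr rfl e1, ← TensorProduct.sum_tmul,
      HopfAlgebra.sum_mul_antipode_eq_algebraMap_counit (rL i)]
    rw [Algebra.algebraMap_eq_smul_one, Algebra.algebraMap_eq_smul_one,
      Algebra.TensorProduct.one_def]
    simp only [TensorProduct.tmul_smul, TensorProduct.smul_tmul', smul_smul]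
    rw [mul_comm (Coalgebra.counit (R := F) (ρ.right i)) (Coalgebra.counit (R := F) (ρ.left i))]
  rw [Finset.sum_congr rfl h3, ← Finset.sum_smul, sum_counit_counit z ρ,
    Algebra.algebraMap_eq_smul_one]

lemma comul_antipode
    (hcc : ∀ a : H, (TensorProduct.comm F H H) (Coalgebra.comul a) = Coalgebra.comul a)
    (x : H) :
    Coalgebra.comul (R := F) (antipode (R := F) x)
      = TensorProduct.map (antipode (R := F)) (antipode (R := F))
          (Coalgebra.comul (R := F) x) := by
  set S : H →ₗ[F] H := antipode (R := F) with hS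
  set r := Repr.arbitrary F x with hr
  set rL : ∀ i, ReprH F (r.left i) := fun i => Repr.arbitrary F (r.left i) with hrL
  set rR : ∀ i, ReprH F (r.right i) := fun i => Repr.arbitrary F (r.right i) with hrR
  have h1 : Coalgebra.comul (R := F) (S x)
      = ∑ i ∈ r.index, Coalgebra.comul (R := F) (S (r.left i))
          * algebraMap F (H ⊗[F] H) (Coalgebra.counit (R := F) (r.right i)) := by
    conv_lhs => rw [← sum_smul_counit x r]
    rw [map_sum, map_sum]
    refine Finset.sum_congr rfl fun i _ => ?_
    rw [map_smul, map_smul, ← Algebra.commutes, ← Algebra.smul_def]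
  rw [h1]
  have h2 : ∀ i ∈ r.index, Coalgebra.comul (R := F) (S (r.left i))
          * algebraMap F (H ⊗[F] H) (Coalgebra.counit (R := F) (r.right i))
      = ∑ k ∈ (rR i).index, Coalgebra.comul (R := F) (S (r.left i))
          * (Coalgebra.comul (R := F) ((rR i).left k)
              * TensorProduct.map S S (Coalgebra.comul (R := F) ((rR i).right k))) := by
    intro i _
    rw [← convII hcc (r.right i) (rR i), Finset.mul_sum]
  rw [Finset.sum_congr rfl h2]
  have key := coassoc_cont (M := H ⊗[F] H) x r rL rR
    (lmul₃ F ((Coalgebra.comul (R := F) (A := H)) ∘ₗ S)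
      (Coalgebra.comul (R := F) (A := H))
      ((TensorProduct.map S S) ∘ₗ (Coalgebra.comul (R := F) (A := H))))
  simp only [lmul₃_apply, LinearMap.comp_apply] at key
  simp only [mul_assoc] at key ⊢
  rw [← key]
  have h3 : ∀ i ∈ r.index, ∑ j ∈ (rL i).index,
      Coalgebra.comul (R := F) (S ((rL i).left j))
        * (Coalgebra.comul (R := F) ((rL i).right j)
            * TensorProduct.map S S (Coalgebra.comul (R := F) (r.right i)))
      = algebraMap F (H ⊗[F] H) (Coalgebra.counit (R := F) (r.left i))
          * TensorProduct.map S S (Coalgebra.comul (R := F) (r.right i)) := by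
    intro i _
    have hassoc : ∀ j ∈ (rL i).index,
        Coalgebra.comul (R := F) (S ((rL i).left j))
          * (Coalgebra.comul (R := F) ((rL i).right j)
              * TensorProduct.map S S (Coalgebra.comul (R := F) (r.right i)))
        = (Coalgebra.comul (R := F) (S ((rL i).left j))
            * Coalgebra.comul (R := F) ((rL i).right j))
            * TensorProduct.map S S (Coalgebra.comul (R := F) (r.right i)) :=
      fun j _ => (mul_assoc _ _ _).symm
    rw [Finset.sum_congr rfl hassoc, ← Finset.sum_mul, convI (r.left i) (rL i)]
  rw [Finset.sum_congr rfl h3]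
  have h4 : ∀ i ∈ r.index,
      algebraMap F (H ⊗[F] H) (Coalgebra.counit (R := F) (r.left i))
          * TensorProduct.map S S (Coalgebra.comul (R := F) (r.right i))
      = Coalgebra.counit (R := F) (r.left i)
          • TensorProduct.map S S (Coalgebra.comul (R := F) (r.right i)) := by
    intro i _; rw [← Algebra.smul_def]
  rw [Finset.sum_congr rfl h4]
  conv_rhs => rw [← sum_counit_smul x r]
  rw [map_sum, map_sum]
  exact Finset.sum_congr rfl fun i _ => by rw [map_smul, map_smul]

noncomputable def post₄ {M : Type*} [AddCommGroup M] [Module F M]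
    {N : Type*} [AddCommGroup N] [Module F N]
    (g : M →ₗ[F] N) (f : H →ₗ[F] H →ₗ[F] H →ₗ[F] H →ₗ[F] M) :
    H →ₗ[F] H →ₗ[F] H →ₗ[F] H →ₗ[F] N :=
  f.compr₂ ((LinearMap.llcomp F H (H →ₗ[F] M) (H →ₗ[F] N))
    ((LinearMap.llcomp F H M N) g))

@[simp] lemma post₄_apply {M : Type*} [AddCommGroup M] [Module F M]
    {N : Type*} [AddCommGroup N] [Module F N]
    (g : M →ₗ[F] N) (f : H →ₗ[F] H →ₗ[F] H →ₗ[F] H →ₗ[F] M) (x y z w : H) :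
    post₄ g f x y z w = g (f x y z w) := rfl

lemma G7
    (hcc : ∀ a : H, (TensorProduct.comm F H H) (Coalgebra.comul a) = Coalgebra.comul a)
    (hBc : Coalgebra.comul ∘ₗ B = TensorProduct.map B B ∘ₗ Coalgebra.comul)
    (hBe : Coalgebra.counit ∘ₗ B = Coalgebra.counit (R := F))
    (hRB : ∀ a b : H, B a * B b =
      B (LinearMap.mul' F H (TensorProduct.map LinearMap.id
          ((LinearMap.mul' F H) ∘ₗ TensorProduct.map
            ((LinearMap.mulRight F b) ∘ₗ B) ((antipode (R := F)) ∘ₗ B))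
          (TensorProduct.map LinearMap.id Coalgebra.comul (Coalgebra.comul a)))))
    (a b : H) :
    Bone B a * Bone B b = Bone B (circ (Bone B) B a b) := by
  set S : H →ₗ[F] H := antipode (R := F) with hS
  set r := Repr.arbitrary F a with hr
  set rL : ∀ i, ReprH F (r.left i) := fun i => Repr.arbitrary F (r.left i) with hrL
  set rR : ∀ i, ReprH F (r.right i) := fun i => Repr.arbitrary F (r.right i) with hrR
  set rb := Repr.arbitrary F b with hrb
  -- Step 1: expand Bone B (circ ...) into the quadruple sum
  have hterm : ∀ i ∈ r.index,
      Bone B ((Bone B (r.left i) * b) * S (B (r.right i)))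
      = ∑ j ∈ (rL i).index, ∑ m ∈ rb.index, ∑ k ∈ (rR i).index,
          ((Bone B ((rL i).left j) * rb.left m) * S (B ((rR i).left k)))
            * B ((Bone B ((rL i).right j) * rb.right m) * S (B ((rR i).right k))) := by
    intro i _
    have hSB : Coalgebra.comul (R := F) (S (B (r.right i)))
        = ∑ k ∈ (rR i).index, S (B ((rR i).left k)) ⊗ₜ[F] S (B ((rR i).right k)) := by
      rw [hS, comul_antipode hcc]
      have hB : Coalgebra.comul (R := F) (B (r.right i))
          = ∑ k ∈ (rR i).index, B ((rR i).left k) ⊗ₜ[F] B ((rR i).right k) := by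
        have := congrFun (congrArg DFunLike.coe hBc) (r.right i)
        simp only [LinearMap.comp_apply] at this
        rw [this, comul_expand (r.right i) (rR i), map_sum]; simp
      rw [hB, map_sum]; simp
    have hΔ : Coalgebra.comul (R := F) ((Bone B (r.left i) * b) * S (B (r.right i)))
        = ∑ j ∈ (rL i).index, ∑ m ∈ rb.index, ∑ k ∈ (rR i).index,
            ((Bone B ((rL i).left j) * rb.left m) * S (B ((rR i).left k)))
              ⊗ₜ[F] ((Bone B ((rL i).right j) * rb.right m) * S (B ((rR i).right k))) := by
      rw [Bialgebra.comul_mul, Bialgebra.comul_mul,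
        Bone_comul_expand B hcc hBc (r.left i) (rL i), comul_expand b rb, hSB,
        Finset.sum_mul_sum]
      rw [Finset.sum_mul]
      refine Finset.sum_congr rfl fun j _ => ?_
      rw [Finset.sum_mul]
      refine Finset.sum_congr rfl fun m _ => ?_
      rw [Finset.mul_sum]
      refine Finset.sum_congr rfl fun k _ => ?_
      rw [Algebra.TensorProduct.tmul_mul_tmul, Algebra.TensorProduct.tmul_mul_tmul]
    have hBone : ∀ w : H, Bone B w = (LinearMap.mul' F H) ((TensorProduct.map LinearMap.id B)
        (Coalgebra.comul (R := F) w)) := fun w => rfl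
    rw [hBone, hΔ]
    simp [map_sum]
  have e1 : Bone B (circ (Bone B) B a b)
      = ∑ i ∈ r.index, ∑ j ∈ (rL i).index, ∑ m ∈ rb.index, ∑ k ∈ (rR i).index,
          ((Bone B ((rL i).left j) * rb.left m) * S (B ((rR i).left k)))
            * B ((Bone B ((rL i).right j) * rb.right m) * S (B ((rR i).right k))) := by
    rw [circ_expand B (Bone B) a b r, map_sum, Finset.sum_congr rfl hterm]
  rw [e1]
  -- move the m-sum outermost
  rw [Finset.sum_congr rfl (fun i (_ : i ∈ r.index) => Finset.sum_comm), Finset.sum_comm]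
  -- per m : swap the middle Sweedler legs, collapse, and reassemble
  have perm : ∀ m ∈ rb.index,
      ∑ i ∈ r.index, ∑ j ∈ (rL i).index, ∑ k ∈ (rR i).index,
        ((Bone B ((rL i).left j) * rb.left m) * S (B ((rR i).left k)))
          * B ((Bone B ((rL i).right j) * rb.right m) * S (B ((rR i).right k)))
      = (Bone B a * rb.left m) * B (rb.right m) := by
    intro m _
    have hsw := swap23 hcc a r rL rR
      (post₄ (LinearMap.mul' F H) (tmul₂₂ F
        (lmul₂ F ((LinearMap.mulRight F (rb.left m)) ∘ₗ Bone B) (S ∘ₗ B))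
        ((lmul₂ F ((LinearMap.mulRight F (rb.right m)) ∘ₗ Bone B) (S ∘ₗ B)).compr₂ B)))
    simp only [post₄_apply, tmul₂₂_apply, lmul₂_apply, LinearMap.comp_apply,
      LinearMap.compr₂_apply, LinearMap.mulRight_apply, LinearMap.mul'_apply] at hsw
    rw [hsw]
    -- collapse inner k-sum via G8 backwards
    have hfold : ∀ i ∈ r.index, ∀ j ∈ (rL i).index,
        ∑ k ∈ (rR i).index,
          ((Bone B ((rL i).left j) * rb.left m) * S (B ((rL i).right j)))
            * B ((Bone B ((rR i).left k) * rb.right m) * S (B ((rR i).right k)))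
        = ((Bone B ((rL i).left j) * rb.left m) * S (B ((rL i).right j)))
            * (B (r.right i) * B (rb.right m)) := by
      intro i _ j _
      rw [← Finset.mul_sum, ← map_sum,
        show ∑ k ∈ (rR i).index, (Bone B ((rR i).left k) * rb.right m)
            * S (B ((rR i).right k)) = circ (Bone B) B (r.right i) (rb.right m) from
          (circ_expand B (Bone B) (r.right i) (rb.right m) (rR i)).symm,
        ← G8 B hRB (r.right i) (rb.right m)]
    rw [Finset.sum_congr rfl (fun i hi => Finset.sum_congr rfl (hfold i hi))]
    -- coassociativity
    have hca := coassoc_cont (M := H) a r rL rR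
      (lmul₃ F ((LinearMap.mulRight F (rb.left m)) ∘ₗ Bone B) (S ∘ₗ B)
        ((LinearMap.mulRight F (B (rb.right m))) ∘ₗ B))
    simp only [lmul₃_apply, LinearMap.comp_apply, LinearMap.mulRight_apply] at hca
    rw [hca]
    -- collapse the antipode pair
    have hcol : ∀ i ∈ r.index,
        ∑ k ∈ (rR i).index,
          ((Bone B (r.left i) * rb.left m) * S (B ((rR i).left k)))
            * (B ((rR i).right k) * B (rb.right m))
        = Coalgebra.counit (R := F) (r.right i)
            • ((Bone B (r.left i) * rb.left m) * B (rb.right m)) := by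
      intro i _
      have h0 : ∀ k ∈ (rR i).index,
          ((Bone B (r.left i) * rb.left m) * S (B ((rR i).left k)))
            * (B ((rR i).right k) * B (rb.right m))
          = ((Bone B (r.left i) * rb.left m)
              * (S (B ((rR i).left k)) * B ((rR i).right k))) * B (rb.right m) := by
        intro k _; simp only [mul_assoc]
      rw [Finset.sum_congr rfl h0, ← Finset.sum_mul, ← Finset.mul_sum,
        sum_antipodeB B hBc hBe (r.right i) (rR i), ← Algebra.commutes, ← Algebra.smul_def,
        smul_mul_assoc]
    rw [Finset.sum_congr rfl hcol]
    have hfac : ∀ i ∈ r.index,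
        Coalgebra.counit (R := F) (r.right i)
            • ((Bone B (r.left i) * rb.left m) * B (rb.right m))
        = (((Coalgebra.counit (R := F) (r.right i) • Bone B (r.left i)) * rb.left m)
            * B (rb.right m)) := by
      intro i _; rw [smul_mul_assoc, smul_mul_assoc]
    rw [Finset.sum_congr rfl hfac, ← Finset.sum_mul, ← Finset.sum_mul]
    have hsum : ∑ i ∈ r.index, Coalgebra.counit (R := F) (r.right i) • Bone B (r.left i)
        = Bone B a := by
      have := congrArg (Bone B) (sum_smul_counit a r)
      simpa [map_sum, map_smul] using this
    rw [hsum]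
  rw [Finset.sum_congr rfl perm]
  have : ∀ m ∈ rb.index, (Bone B a * rb.left m) * B (rb.right m)
      = Bone B a * (rb.left m * B (rb.right m)) := fun m _ => mul_assoc _ _ _
  rw [Finset.sum_congr rfl this, ← Finset.mul_sum, ← Bone_expand B b rb]

end Components

/-- If `(H,B)` is a Rota-Baxter Hopf algebra, i.e. `B` is a coalgebra homomorphism with
`B(a)B(b) = B(a₁ B(a₂) b S(B(a₃)))`, then `(H, B₁, B)` with `B₁(a) = a₁ B(a₂)` is a
Rota-Baxter system of Hopf algebras. -/
theorem rbHopf_gives_rbSystem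
    (hcc : ∀ a : H, (TensorProduct.comm F H H) (Coalgebra.comul a) = Coalgebra.comul a)
    (B : H →ₗ[F] H)
    (hBc : Coalgebra.comul ∘ₗ B = TensorProduct.map B B ∘ₗ Coalgebra.comul)
    (hBe : Coalgebra.counit ∘ₗ B = Coalgebra.counit (R := F))
    (hRB : ∀ a b : H, B a * B b =
      B (LinearMap.mul' F H (TensorProduct.map LinearMap.id
          ((LinearMap.mul' F H) ∘ₗ TensorProduct.map
            ((LinearMap.mulRight F b) ∘ₗ B) ((antipode (R := F)) ∘ₗ B))
          (TensorProduct.map LinearMap.id Coalgebra.comul (Coalgebra.comul a))))) :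
    IsRBSystem ((LinearMap.mul' F H) ∘ₗ TensorProduct.map LinearMap.id B ∘ₗ Coalgebra.comul) B := by
  have hdef : ((LinearMap.mul' F H) ∘ₗ TensorProduct.map LinearMap.id B ∘ₗ Coalgebra.comul)
      = Bone B := rfl
  rw [hdef]
  unfold IsRBSystem
  exact ⟨Bone_comul B hcc hBc, Bone_counit B hBe, hBc, hBe,
    Bone_one B (B_one B hBc hBe hRB), B_one B hBc hBe hRB,
    G7 B hcc hBc hBe hRB, G8 B hRB⟩
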